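/- Let N ≥ 1 and q > 0, q ≠ 1 real. Set D = (K^{1/2} − K^{−1/2})/(q − q^{−1}), let G be the diagonal matrix with entries G_{rr} = (q^{(N−2r)/2} + q^{−(N−2r)/2})^{−1/2} (i.e. G = (K^{1/2} + K^{−1/2})^{−1/2}), and set A = G·(E + F)·G. Then the matrix identity D²·A − (q + q^{−1})·D·A·D + A·D² = A holds. (Combination of Corollary 4.6, which identifies A as the matrix of 1⊗C on S^{⊗3}, with the relation verified in the proof of Theorem 4.7; it shows that the pair D, A satisfies the defining relation of the nonstandard deformation U′_q so₃.) -/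

import Mathlib

noncomputable section

/-- The quantum number `[x] = (q^x − q^{−x})/(q − q⁻¹)` for real `x` (real powers). -/
def qnum (q : ℝ) (x : ℝ) : ℝ := (q ^ x - q ^ (-x)) / (q - q⁻¹)

/-- The matrix of `E` in the `(N+1)`-dimensional irreducible representation of
`U_q sl₂`: `E_{r−1,r} = ([N−r+1]·[r])^{1/2}` for `1 ≤ r ≤ N`. -/
def Emat (q : ℝ) (N : ℕ) : Matrix (Fin (N + 1)) (Fin (N + 1)) ℝ :=
  fun r c => if (c : ℕ) = (r : ℕ) + 1 then
    Real.sqrt (qnum q ((N : ℝ) - (c : ℕ) + 1) * qnum q ((c : ℕ) : ℝ)) else 0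

/-- `F = Eᵀ`. -/
def Fmat (q : ℝ) (N : ℕ) : Matrix (Fin (N + 1)) (Fin (N + 1)) ℝ :=
  Matrix.transpose (Emat q N)

/-- The diagonal matrix `K^{1/2}` with entries `q^{(N−2r)/2}`. -/
def Khalf (q : ℝ) (N : ℕ) : Matrix (Fin (N + 1)) (Fin (N + 1)) ℝ :=
  Matrix.diagonal fun r => q ^ (((N : ℝ) - 2 * (r : ℕ)) / 2)

/-- The diagonal matrix `K^{−1/2}` with entries `q^{−(N−2r)/2}` (the inverse of `K^{1/2}`). -/
def Kneghalf (q : ℝ) (N : ℕ) : Matrix (Fin (N + 1)) (Fin (N + 1)) ℝ :=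
  Matrix.diagonal fun r => q ^ (-(((N : ℝ) - 2 * (r : ℕ)) / 2))

/-- `D = (K^{1/2} − K^{−1/2})/(q − q⁻¹)`. -/
def Dmat (q : ℝ) (N : ℕ) : Matrix (Fin (N + 1)) (Fin (N + 1)) ℝ :=
  (q - q⁻¹)⁻¹ • (Khalf q N - Kneghalf q N)

/-- `G = (K^{1/2} + K^{−1/2})^{−1/2}`, the diagonal matrix with entries
`(q^{(N−2r)/2} + q^{−(N−2r)/2})^{−1/2}`. -/
def Gmat (q : ℝ) (N : ℕ) : Matrix (Fin (N + 1)) (Fin (N + 1)) ℝ :=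
  Matrix.diagonal fun r =>
    (q ^ (((N : ℝ) - 2 * (r : ℕ)) / 2) + q ^ (-(((N : ℝ) - 2 * (r : ℕ)) / 2)))
      ^ (-(1 : ℝ) / 2)

/-- `A = G·(E+F)·G`, the matrix of `1 ⊗ C` on `S^{⊗3}` (Corollary 4.6). -/
def Amat (q : ℝ) (N : ℕ) : Matrix (Fin (N + 1)) (Fin (N + 1)) ℝ :=
  Gmat q N * (Emat q N + Fmat q N) * Gmat q N

lemma qsub_ne (q : ℝ) (hq0 : 0 < q) (hq1 : q ≠ 1) : q - q⁻¹ ≠ 0 := by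
  have hq : q ≠ 0 := ne_of_gt hq0
  intro h
  have h2 : q * q = 1 := by
    field_simp at h
    linarith [h]
  have : (q - 1) * (q + 1) = 0 := by nlinarith
  rcases mul_eq_zero.mp this with h3 | h3
  · exact hq1 (by linarith)
  · linarith

lemma comb (a b s p : ℝ) (hp : p ≠ 0) :
    (a/p)^2 - s*((a/p)*(b/p)) + (b/p)^2 = (a^2 - s*(a*b) + b^2)/p^2 := by
  field_simp

lemma key (q u : ℝ) (hq0 : 0 < q) (hq1 : q ≠ 1) (hu : u ≠ 0) :
    ((u - u⁻¹)/(q - q⁻¹))^2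
      - (q + q⁻¹) * (((u - u⁻¹)/(q - q⁻¹)) * ((u/q - q/u)/(q - q⁻¹)))
      + ((u/q - q/u)/(q - q⁻¹))^2 = 1 := by
  have hq : q ≠ 0 := ne_of_gt hq0
  have hs := qsub_ne q hq0 hq1
  have hnum : (u - u⁻¹)^2 - (q + q⁻¹) * ((u - u⁻¹) * (u/q - q/u)) + (u/q - q/u)^2
      = (q - q⁻¹)^2 := by
    field_simp
    ring
  rw [comb _ _ _ _ hs, hnum, div_self (pow_ne_zero 2 hs)]

lemma entry {n : ℕ} (d : Fin n → ℝ) (s : ℝ) (A : Matrix (Fin n) (Fin n) ℝ) (i j : Fin n) :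
    ((Matrix.diagonal d)^2 * A - s • (Matrix.diagonal d * A * Matrix.diagonal d)
      + A * (Matrix.diagonal d)^2) i j
      = (d i ^ 2 - s * (d i * d j) + d j ^ 2) * A i j := by
  simp [pow_two, Matrix.diagonal_mul_diagonal, Matrix.diagonal_mul, Matrix.mul_diagonal,
    Matrix.sub_apply, Matrix.add_apply, Matrix.smul_apply]
  ring

/-- Combination of Corollary 4.6 with the proof of Theorem 4.7: the pair `D`, `A`
satisfies the defining relation `D²A − (q+q⁻¹)·DAD + AD² = A` of the nonstandard
deformation `U′_q so₃`. -/
theorem D_A_relation (q : ℝ) (hq0 : 0 < q) (hq1 : q ≠ 1) (N : ℕ) (hN : 1 ≤ N) :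
    Dmat q N ^ 2 * Amat q N - (q + q⁻¹) • (Dmat q N * Amat q N * Dmat q N) +
      Amat q N * Dmat q N ^ 2 = Amat q N := by
  have hq : q ≠ 0 := ne_of_gt hq0
  have hD : Dmat q N = Matrix.diagonal (fun r : Fin (N+1) =>
      (q ^ (((N : ℝ) - 2 * (r : ℕ)) / 2) - q ^ (-(((N : ℝ) - 2 * (r : ℕ)) / 2)))
        / (q - q⁻¹)) := by
    ext i j
    by_cases h : i = j <;>
      simp [Dmat, Khalf, Kneghalf, Matrix.diagonal_apply, h, div_eq_inv_mul]
  rw [hD]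
  ext i j
  rw [entry]
  by_cases h1 : (j : ℕ) = (i : ℕ) + 1
  · have hji : ((j : ℕ) : ℝ) = ((i : ℕ) : ℝ) + 1 := by exact_mod_cast congrArg Nat.cast h1
    have hm : ((N : ℝ) - 2 * ((j : ℕ) : ℝ)) / 2 = ((N : ℝ) - 2 * ((i : ℕ) : ℝ)) / 2 - 1 := by
      rw [hji]; ring
    set x : ℝ := ((N : ℝ) - 2 * ((i : ℕ) : ℝ)) / 2 with hx
    have hu : q ^ x ≠ 0 := (Real.rpow_pos_of_pos hq0 x).ne'
    have hc : (q ^ x - q ^ (-x)) / (q - q⁻¹) = (q ^ x - (q ^ x)⁻¹) / (q - q⁻¹) := by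
      rw [Real.rpow_neg hq0.le]
    have hc2 : (q ^ (((N : ℝ) - 2 * ((j : ℕ) : ℝ)) / 2)
        - q ^ (-(((N : ℝ) - 2 * ((j : ℕ) : ℝ)) / 2))) / (q - q⁻¹)
        = (q ^ x / q - q / q ^ x) / (q - q⁻¹) := by
      rw [hm, Real.rpow_neg hq0.le, Real.rpow_sub hq0, Real.rpow_one, inv_div]
    simp only [hc, hc2]
    rw [key q (q ^ x) hq0 hq1 hu, one_mul]
  · by_cases h2 : (i : ℕ) = (j : ℕ) + 1
    · have hij : ((i : ℕ) : ℝ) = ((j : ℕ) : ℝ) + 1 := by exact_mod_cast congrArg Nat.cast h2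
      have hm : ((N : ℝ) - 2 * ((i : ℕ) : ℝ)) / 2 = ((N : ℝ) - 2 * ((j : ℕ) : ℝ)) / 2 - 1 := by
        rw [hij]; ring
      set x : ℝ := ((N : ℝ) - 2 * ((j : ℕ) : ℝ)) / 2 with hx
      have hu : q ^ x ≠ 0 := (Real.rpow_pos_of_pos hq0 x).ne'
      have hc : (q ^ x - q ^ (-x)) / (q - q⁻¹) = (q ^ x - (q ^ x)⁻¹) / (q - q⁻¹) := by
        rw [Real.rpow_neg hq0.le]
      have hc2 : (q ^ (((N : ℝ) - 2 * ((i : ℕ) : ℝ)) / 2)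
          - q ^ (-(((N : ℝ) - 2 * ((i : ℕ) : ℝ)) / 2))) / (q - q⁻¹)
          = (q ^ x / q - q / q ^ x) / (q - q⁻¹) := by
        rw [hm, Real.rpow_neg hq0.le, Real.rpow_sub hq0, Real.rpow_one, inv_div]
      simp only [hc, hc2]
      have hk := key q (q ^ x) hq0 hq1 hu
      have : ((q ^ x / q - q / q ^ x) / (q - q⁻¹)) ^ 2
          - (q + q⁻¹) * ((q ^ x / q - q / q ^ x) / (q - q⁻¹)
              * ((q ^ x - (q ^ x)⁻¹) / (q - q⁻¹)))
          + ((q ^ x - (q ^ x)⁻¹) / (q - q⁻¹)) ^ 2 = 1 := by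
        linear_combination hk
      rw [this, one_mul]
    · have hA : Amat q N i j = 0 := by
        simp [Amat, Gmat, Matrix.diagonal_mul, Matrix.mul_diagonal, Matrix.add_apply,
          Emat, Fmat, Matrix.transpose_apply, h1, h2]
      rw [hA, mul_zero]
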